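/- Let f ∈ A satisfy Re(f(z)/z) ≥ 0 on D \ {0}, write p(z) = f(z)/z (so p(0)=1 and Re p ≥ 0 on D). If k : [0,1) → ℝ satisfies k(r) ≥ (1+r²)/(1-r²) for all r, then Re[k(|z|) f(z)/z + f'(z)] ≥ 0 for all z ∈ D \ {0}. -/

import Mathlib

open Metric Complex

lemma re_pos_of_re_nonneg {p : ℂ → ℂ} (hp : DifferentiableOn ℂ p (ball (0:ℂ) 1))
    (h0 : (p 0).re = 1) (hre : ∀ z ∈ ball (0:ℂ) 1, 0 ≤ (p z).re) :
    ∀ z ∈ ball (0:ℂ) 1, 0 < (p z).re := by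
  intro z hz
  by_contra hcon
  have hz0 : (p z).re = 0 := le_antisymm (not_lt.1 hcon) (hre z hz)
  set g : ℂ → ℂ := fun w => Complex.exp (-p w) with hg
  have hgd : DifferentiableOn ℂ g (ball (0:ℂ) 1) := hp.neg.cexp
  have hmax : IsMaxOn (norm ∘ g) (ball (0:ℂ) 1) z := by
    intro w hw
    simp only [Function.comp, hg, Complex.norm_exp, Complex.neg_re,
      Set.mem_setOf_eq, hz0, neg_zero, Real.exp_zero]
    exact Real.exp_le_one_iff.mpr (by linarith [hre w hw])
  have heq := Complex.eqOn_of_isPreconnected_of_isMaxOn_norm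
    (convex_ball (0:ℂ) 1).isPreconnected isOpen_ball hgd hz hmax
    (mem_ball_self one_pos)
  have : ‖g 0‖ = ‖g z‖ := by rw [heq]; rfl
  simp only [hg, Complex.norm_exp, Complex.neg_re, h0, hz0, neg_zero,
    Real.exp_zero] at this
  have := Real.exp_lt_one_iff.mpr (by norm_num : (-1:ℝ) < 0)
  linarith [this]

lemma sq_norm_lt {u v : ℂ} (h : ‖u‖^2 < ‖v‖^2) : ‖u‖ < ‖v‖ :=
  lt_of_pow_lt_pow_left₀ 2 (norm_nonneg _) h

lemma norm_sq_eq' (u : ℂ) : ‖u‖^2 = u.re^2 + u.im^2 := by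
  rw [Complex.sq_norm, Complex.normSq_apply]; ring

lemma deriv_bound_of_re_pos {p : ℂ → ℂ} (hp : DifferentiableOn ℂ p (ball (0:ℂ) 1))
    (hre : ∀ z ∈ ball (0:ℂ) 1, 0 < (p z).re) :
    ∀ z ∈ ball (0:ℂ) 1, ‖deriv p z‖ * (1 - ‖z‖^2) ≤ 2 * (p z).re := by
  intro z₀ hz₀
  have hr : ‖z₀‖ < 1 := by simpa using hz₀
  set a := p z₀ with ha
  have hare : 0 < a.re := hre z₀ hz₀
  set φ : ℂ → ℂ := fun w => (w + z₀) / (1 + (starRingEnd ℂ) z₀ * w) with hφdef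
  have hden : ∀ w ∈ ball (0:ℂ) 1, (1 + (starRingEnd ℂ) z₀ * w) ≠ 0 := by
    intro w hw h0
    have h1 : (starRingEnd ℂ) z₀ * w = -1 := by linear_combination h0
    have h2 : ‖(starRingEnd ℂ) z₀ * w‖ < 1 := by
      rw [norm_mul, RCLike.norm_conj]
      calc ‖z₀‖ * ‖w‖ ≤ 1 * ‖w‖ := mul_le_mul_of_nonneg_right hr.le (norm_nonneg _)
        _ < 1 := by simpa using hw
    rw [h1] at h2; simp at h2
  have hφmaps : Set.MapsTo φ (ball (0:ℂ) 1) (ball (0:ℂ) 1) := by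
    intro w hw
    have hw' : ‖w‖ < 1 := by simpa using hw
    have hw2 : w.re^2 + w.im^2 < 1 := by
      rw [← norm_sq_eq']; nlinarith [norm_nonneg w]
    have hz2 : z₀.re^2 + z₀.im^2 < 1 := by
      rw [← norm_sq_eq']; nlinarith [norm_nonneg z₀]
    simp only [mem_ball, dist_zero_right, hφdef]
    rw [norm_div, div_lt_one (norm_pos_iff.mpr (hden w hw))]
    refine sq_norm_lt ?_
    rw [norm_sq_eq', norm_sq_eq']
    simp only [Complex.add_re, Complex.add_im, Complex.mul_re, Complex.mul_im,
      Complex.conj_re, Complex.conj_im, Complex.one_re, Complex.one_im]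
    nlinarith [mul_pos (sub_pos.2 hw2) (sub_pos.2 hz2)]
  have hφ0 : φ 0 = z₀ := by simp [hφdef]
  -- h = T ∘ p ∘ φ
  set h : ℂ → ℂ := fun w => (p (φ w) - a) / (p (φ w) + (starRingEnd ℂ) a) with hhdef
  have hTden : ∀ u : ℂ, 0 < u.re → u + (starRingEnd ℂ) a ≠ 0 := by
    intro u hu h0
    have : (u + (starRingEnd ℂ) a).re = u.re + a.re := by simp
    rw [h0] at this; simp at this; linarith
  have hφdiff : DifferentiableOn ℂ φ (ball (0:ℂ) 1) := by
    apply DifferentiableOn.div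
    · exact (differentiable_id.add_const z₀).differentiableOn
    · exact ((differentiable_id.const_mul _).const_add 1).differentiableOn
    · exact hden
  have hpφ : DifferentiableOn ℂ (fun w => p (φ w)) (ball (0:ℂ) 1) := hp.comp hφdiff hφmaps
  have hhdiff : DifferentiableOn ℂ h (ball (0:ℂ) 1) := by
    refine DifferentiableOn.div (hpφ.sub_const a) (hpφ.add_const _) ?_
    intro w hw
    exact hTden _ (hre _ (hφmaps hw))
  have hh0 : h 0 = 0 := by simp [hhdef, hφ0, ← ha]
  have hhmaps : Set.MapsTo h (ball (0:ℂ) 1) (ball (h 0) 1) := by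
    rw [hh0]
    intro w hw
    have hu : 0 < (p (φ w)).re := hre _ (hφmaps hw)
    set u := p (φ w)
    simp only [mem_ball, dist_zero_right, hhdef]
    rw [norm_div, div_lt_one (norm_pos_iff.mpr (hTden u hu))]
    refine sq_norm_lt ?_
    rw [norm_sq_eq', norm_sq_eq']
    simp only [Complex.add_re, Complex.add_im, Complex.sub_re, Complex.sub_im,
      Complex.conj_re, Complex.conj_im]
    nlinarith [mul_pos hu hare]
  -- derivative of h at 0
  set d := deriv p z₀ with hd
  have hp' : HasDerivAt p d z₀ :=
    (hp.differentiableAt (isOpen_ball.mem_nhds hz₀)).hasDerivAt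
  have hφ' : HasDerivAt φ (1 - z₀ * (starRingEnd ℂ) z₀) 0 := by
    have h1 : HasDerivAt (fun w : ℂ => w + z₀) 1 0 := (hasDerivAt_id 0).add_const z₀
    have h2 : HasDerivAt (fun w : ℂ => 1 + (starRingEnd ℂ) z₀ * w) ((starRingEnd ℂ) z₀) 0 := by
      simpa using ((hasDerivAt_id 0).const_mul ((starRingEnd ℂ) z₀)).const_add 1
    have := h1.div h2 (by simp)
    convert this using 1
    · rfl
    · rfl
    · rfl
    · simp
  have hpφ' : HasDerivAt (fun w => p (φ w)) (d * (1 - z₀ * (starRingEnd ℂ) z₀)) 0 := by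
    have := HasDerivAt.comp 0 (hφ0 ▸ hp') hφ'
    exact this
  have hnum : HasDerivAt (fun w => p (φ w) - a) (d * (1 - z₀ * (starRingEnd ℂ) z₀)) 0 :=
    hpφ'.sub_const a
  have hdenom : HasDerivAt (fun w => p (φ w) + (starRingEnd ℂ) a)
      (d * (1 - z₀ * (starRingEnd ℂ) z₀)) 0 := hpφ'.add_const _
  have hane : (p (φ 0)) + (starRingEnd ℂ) a ≠ 0 := by
    rw [hφ0, ← ha]; exact hTden a hare
  have hh' : HasDerivAt h
      ((d * (1 - z₀ * (starRingEnd ℂ) z₀) * (p (φ 0) + (starRingEnd ℂ) a)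
        - (p (φ 0) - a) * (d * (1 - z₀ * (starRingEnd ℂ) z₀)))
        / (p (φ 0) + (starRingEnd ℂ) a)^2) 0 := hnum.div hdenom hane
  have hexpand : (d * (1 - z₀ * (starRingEnd ℂ) z₀) * (p (φ 0) + (starRingEnd ℂ) a)
        - (p (φ 0) - a) * (d * (1 - z₀ * (starRingEnd ℂ) z₀)))
        / (p (φ 0) + (starRingEnd ℂ) a)^2
      = d * (1 - z₀ * (starRingEnd ℂ) z₀) / (a + (starRingEnd ℂ) a) := by
    rw [hφ0, ← ha]
    have hne := hTden a hare
    field_simp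
    ring
  rw [hexpand] at hh'
  -- Schwarz lemma
  have hSch : ‖deriv h 0‖ ≤ 1 / 1 :=
    Complex.norm_deriv_le_div_of_mapsTo_ball hhdiff (hhmaps.mono_right ball_subset_closedBall) one_pos
  rw [hh'.deriv] at hSch
  -- unpack norms
  have e1 : (1 : ℂ) - z₀ * (starRingEnd ℂ) z₀ = ((1 - ‖z₀‖^2 : ℝ) : ℂ) := by
    rw [Complex.mul_conj, Complex.normSq_eq_norm_sq]
    push_cast
    ring
  have e2 : a + (starRingEnd ℂ) a = ((2 * a.re : ℝ) : ℂ) := by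
    rw [Complex.add_conj]
  rw [e1, e2, norm_div, norm_mul, Complex.norm_real, Complex.norm_real,
    Real.norm_eq_abs, Real.norm_eq_abs,
    _root_.abs_of_nonneg (by nlinarith [norm_nonneg z₀] : (0:ℝ) ≤ 1 - ‖z₀‖^2),
    _root_.abs_of_pos (by linarith : (0:ℝ) < 2 * a.re)] at hSch
  norm_num at hSch
  exact (div_le_one (by linarith)).mp hSch

/-- If `f ∈ A` is a generator (`Re (f z / z) ≥ 0` on the punctured disk) and
`k r ≥ (1+r²)/(1-r²)` for `r ∈ [0,1)`, then
`Re (k |z| * f z / z + f' z) ≥ 0` on the punctured disk. -/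
theorem generator_in_large_linear_class
    (f : ℂ → ℂ) (hf : DifferentiableOn ℂ f (ball (0:ℂ) 1))
    (hf0 : f 0 = 0) (hf1 : deriv f 0 = 1)
    (hgen : ∀ z ∈ ball (0:ℂ) 1, z ≠ 0 → 0 ≤ (f z / z).re)
    (k : ℝ → ℝ) (hk : ∀ r ∈ Set.Ico (0:ℝ) 1, (1 + r^2) / (1 - r^2) ≤ k r) :
    ∀ z ∈ ball (0:ℂ) 1, z ≠ 0 → 0 ≤ ((k ‖z‖ : ℂ) * (f z / z) + deriv f z).re := by
  intro z hz hz0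
  set p : ℂ → ℂ := dslope f 0 with hpdef
  have hp : DifferentiableOn ℂ p (ball (0:ℂ) 1) :=
    (differentiableOn_dslope (isOpen_ball.mem_nhds (mem_ball_self one_pos))).mpr hf
  have hpz : ∀ w : ℂ, w ≠ 0 → p w = f w / w := by
    intro w hw
    rw [hpdef, dslope_of_ne _ hw, slope_def_field, hf0]
    ring_nf
  have hp0 : p 0 = 1 := by rw [hpdef, dslope_same, hf1]
  have hrenonneg : ∀ w ∈ ball (0:ℂ) 1, 0 ≤ (p w).re := by
    intro w hw
    rcases eq_or_ne w 0 with rfl | hw0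
    · rw [hp0]; norm_num
    · rw [hpz w hw0]; exact hgen w hw hw0
  have hrepos := re_pos_of_re_nonneg hp (by rw [hp0]; norm_num) hrenonneg
  have hbound := deriv_bound_of_re_pos hp hrepos
  -- f = z * p z on the ball, hence deriv f z = p z + z * deriv p z
  have hfeq : Set.EqOn f (fun w => w * p w) (ball (0:ℂ) 1) := by
    intro w hw
    rcases eq_or_ne w 0 with rfl | hw0
    · simp [hf0]
    · show f w = w * p w
      rw [hpz w hw0]
      field_simp
  have hderiv : deriv f z = p z + z * deriv p z := by
    have hev : f =ᶠ[nhds z] (fun w => w * p w) :=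
      Filter.eventuallyEq_of_mem (isOpen_ball.mem_nhds hz) hfeq
    have hp' : HasDerivAt p (deriv p z) z :=
      (hp.differentiableAt (isOpen_ball.mem_nhds hz)).hasDerivAt
    have hmul : HasDerivAt (fun w => w * p w) (1 * p z + z * deriv p z) z :=
      (hasDerivAt_id z).mul hp'
    rw [hev.deriv_eq, hmul.deriv]
    ring
  rw [hderiv, ← hpz z hz0]
  -- now a purely real computation
  set r := ‖z‖ with hrdef
  have hr1 : r < 1 := by simpa [hrdef] using hz
  have hr0 : 0 ≤ r := norm_nonneg z
  have hs : 0 < 1 - r^2 := by nlinarith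
  set P := (p z).re with hP
  have hPpos : 0 < P := hrepos z hz
  set N := ‖deriv p z‖ with hN
  have hN0 : 0 ≤ N := norm_nonneg _
  have hb : N * (1 - r^2) ≤ 2 * P := hbound z hz
  have hK : (1 + r^2) / (1 - r^2) ≤ k r := hk r ⟨hr0, hr1⟩
  have hK' : 1 + r^2 ≤ k r * (1 - r^2) := (div_le_iff₀ hs).mp hK
  have ht : -(r * N) ≤ (z * deriv p z).re := by
    have h1 : |(z * deriv p z).re| ≤ ‖z * deriv p z‖ := Complex.abs_re_le_norm _
    have h2 : ‖z * deriv p z‖ = r * N := by rw [norm_mul]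
    rw [h2] at h1
    linarith [neg_le_of_abs_le h1]
  have hre_expand : (((k r : ℝ) : ℂ) * p z + (p z + z * deriv p z)).re
      = k r * P + P + (z * deriv p z).re := by
    simp [Complex.add_re, Complex.re_ofReal_mul, hP]
    ring
  rw [hre_expand]
  nlinarith [mul_le_mul_of_nonneg_right hK' hPpos.le,
    mul_le_mul_of_nonneg_left hb hr0,
    mul_le_mul_of_nonneg_left ht hs.le,
    mul_pos hs hPpos, sq_nonneg (1 - r), mul_nonneg (mul_nonneg hr0 hr0) hPpos.le,
    mul_nonneg hr0 hPpos.le]
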